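/- arXiv:1507.05950 — 2 statements merged into one kernel-verified Lean document; each statement's English description precedes it below -/
import Mathlib

section
/- Let A be an n×n real symmetric PSD matrix whose top eigenvalue is λ₁ with unit eigenvector v₁. Let x̂ be the vector obtained by keeping the k largest-in-absolute-value entries of v₁ and zeroing the rest, and let x = x̂/‖x̂‖₂. Then x^T A x ≥ (k/n) λ₁. -/
open Matrix Finset

/-- Truncating the top unit eigenvector of a PSD matrix to its `k`
largest-in-absolute-value entries and renormalizing yields a vector whose
quadratic form is at least `(k/n) λ₁`. -/
theorem stmt_2 {n : ℕ} (A : Matrix (Fin n) (Fin n) ℝ) (hA : A.PosSemidef)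
    (lam : ℝ) (v : Fin n → ℝ)
    (heig : A.mulVec v = lam • v)
    (hv_unit : v ⬝ᵥ v = 1)
    (hmax : ∀ u : Fin n → ℝ, u ⬝ᵥ u = 1 → u ⬝ᵥ A.mulVec u ≤ lam)
    (k : ℕ) (hk : 1 ≤ k) (hkn : k ≤ n)
    (S : Finset (Fin n)) (hS : S.card = k)
    (htop : ∀ i ∈ S, ∀ j ∉ S, |v j| ≤ |v i|) :
    let xhat : Fin n → ℝ := fun i => if i ∈ S then v i else 0
    let x : Fin n → ℝ := (Real.sqrt (xhat ⬝ᵥ xhat))⁻¹ • xhat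
    ((k : ℝ) / n) * lam ≤ x ⬝ᵥ A.mulVec x := by
  intro xhat x
  set s : ℝ := xhat ⬝ᵥ xhat with hs
  have hs_eq : s = ∑ i ∈ S, v i * v i := by
    simp only [hs, dotProduct, xhat]
    have h0 : ∀ i : Fin n, (if i ∈ S then v i else 0) * (if i ∈ S then v i else 0)
        = if i ∈ S then v i * v i else 0 := by intro i; split <;> simp
    simp only [h0]
    rw [Finset.sum_ite_mem, Finset.univ_inter]
  have hxv : xhat ⬝ᵥ v = s := by
    simp only [hs, dotProduct]
    refine Finset.sum_congr rfl fun i _ => ?_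
    by_cases h : i ∈ S <;> simp [xhat, h]
  have hcompl : ∑ j ∈ Sᶜ, v j * v j = 1 - s := by
    have h2 := Finset.sum_add_sum_compl S (fun i => v i * v i)
    have h1 : ∑ i, v i * v i = 1 := hv_unit
    rw [h1, ← hs_eq] at h2
    linarith
  have hcardc : (Sᶜ.card : ℝ) = (n : ℝ) - k := by
    have h3 : Sᶜ.card = n - k := by rw [Finset.card_compl, hS]; simp
    rw [h3, Nat.cast_sub hkn]
  have key : (k : ℝ) * (1 - s) ≤ ((n : ℝ) - k) * s := by
    have hmain : ∑ i ∈ S, ∑ j ∈ Sᶜ, v j * v j ≤ ∑ i ∈ S, ∑ j ∈ Sᶜ, v i * v i := by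
      refine Finset.sum_le_sum fun i hi => Finset.sum_le_sum fun j hj => ?_
      have h4 := htop i hi j (by simpa using hj)
      nlinarith [abs_nonneg (v j), abs_nonneg (v i), abs_mul_abs_self (v j), abs_mul_abs_self (v i)]
    have hl : ∑ i ∈ S, ∑ j ∈ Sᶜ, v j * v j = (k : ℝ) * (1 - s) := by
      rw [Finset.sum_const, hcompl, hS, nsmul_eq_mul]
    have hr : ∑ i ∈ S, ∑ j ∈ Sᶜ, v i * v i = ((n : ℝ) - k) * s := by
      have h5 : ∀ i ∈ S, ∑ _j ∈ Sᶜ, v i * v i = ((n:ℝ)-k) * (v i * v i) := fun i _ => by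
        rw [Finset.sum_const, nsmul_eq_mul, hcardc]
      rw [Finset.sum_congr rfl h5, ← Finset.mul_sum, ← hs_eq]
    rw [hl, hr] at hmain
    exact hmain
  have hn0 : (0:ℝ) < n := by exact_mod_cast lt_of_lt_of_le hk hkn <;> omega
  have hk0 : (0:ℝ) < k := by exact_mod_cast hk
  have hskn : (k : ℝ) / n ≤ s := by
    rw [div_le_iff₀ hn0]
    nlinarith
  have hspos : 0 < s := lt_of_lt_of_le (by positivity) hskn
  have hlam : v ⬝ᵥ A.mulVec v = lam := by
    rw [heig, dotProduct_smul, hv_unit, smul_eq_mul, mul_one]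
  have hlam0 : 0 ≤ lam := by
    have h6 := hA.dotProduct_mulVec_nonneg v
    simpa [hlam] using h6
  have hAxv : xhat ⬝ᵥ A.mulVec v = lam * s := by
    rw [heig, dotProduct_smul, hxv, smul_eq_mul]
  have hsym : Aᵀ = A := by
    have h7 := hA.1
    simpa [Matrix.IsHermitian, Matrix.conjTranspose_eq_transpose_of_trivial] using h7
  have hvAx : v ⬝ᵥ A.mulVec xhat = lam * s := by
    rw [Matrix.dotProduct_mulVec]
    have h8 : A.vecMul v = A.mulVec v := by
      conv_lhs => rw [← hsym]
      rw [Matrix.vecMul_transpose]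
    rw [h8, heig, smul_dotProduct, dotProduct_comm, hxv, smul_eq_mul]
  have hCS : lam * s ^ 2 ≤ xhat ⬝ᵥ A.mulVec xhat := by
    have h9 := hA.dotProduct_mulVec_nonneg (xhat - s • v)
    simp only [star_trivial, Matrix.mulVec_sub, Matrix.mulVec_smul, dotProduct_sub,
      sub_dotProduct, smul_dotProduct, dotProduct_smul, smul_eq_mul] at h9
    rw [hAxv, hvAx, hlam] at h9
    nlinarith
  have hxAx : x ⬝ᵥ A.mulVec x = s⁻¹ * (xhat ⬝ᵥ A.mulVec xhat) := by
    show ((Real.sqrt s)⁻¹ • xhat) ⬝ᵥ A.mulVec ((Real.sqrt s)⁻¹ • xhat) = _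
    rw [Matrix.mulVec_smul, smul_dotProduct, dotProduct_smul, smul_eq_mul, smul_eq_mul,
      ← mul_assoc, ← mul_inv, Real.mul_self_sqrt hspos.le]
  rw [hxAx]
  have h10 : lam * s ≤ s⁻¹ * (xhat ⬝ᵥ A.mulVec xhat) := by
    have h11 : lam * s = s⁻¹ * (lam * s ^ 2) := by field_simp
    rw [h11]
    exact mul_le_mul_of_nonneg_left hCS (by positivity)
  nlinarith [mul_le_mul_of_nonneg_right hskn hlam0]
end

section
/- For nonnegative reals V₁, V₂ and OPT satisfying V₁ ≥ OPT/√k and V₂ ≥ (k/n)·OPT with 1 ≤ k ≤ n, one has max{V₁, V₂} ≥ OPT/n^{1/3}. -/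
/-- Combining the two algorithmic guarantees `V₁ ≥ OPT/√k` and
`V₂ ≥ (k/n)·OPT` yields `max{V₁,V₂} ≥ OPT / n^{1/3}`. -/
theorem stmt_4 (V₁ V₂ OPT : ℝ) (hV₁0 : 0 ≤ V₁) (hV₂0 : 0 ≤ V₂) (hOPT : 0 ≤ OPT)
    (k n : ℕ) (hk : 1 ≤ k) (hkn : k ≤ n)
    (h1 : OPT / Real.sqrt k ≤ V₁)
    (h2 : ((k : ℝ) / n) * OPT ≤ V₂) :
    OPT / (n : ℝ) ^ ((1 : ℝ) / 3) ≤ max V₁ V₂ := by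
  have hn1 : (1 : ℝ) ≤ (n : ℝ) := by exact_mod_cast le_trans hk hkn
  have hn0 : (0 : ℝ) < (n : ℝ) := by linarith
  have hk0 : (0 : ℝ) < (k : ℝ) := by exact_mod_cast hk
  by_cases hc : (k : ℝ) ≤ (n : ℝ) ^ ((2 : ℝ) / 3)
  · -- √k ≤ n^(1/3), use V₁
    refine le_trans (le_trans ?_ h1) (le_max_left _ _)
    have hsq : Real.sqrt k ≤ (n : ℝ) ^ ((1 : ℝ) / 3) := by
      rw [Real.sqrt_eq_rpow]
      calc (k:ℝ) ^ ((1:ℝ)/2) ≤ ((n:ℝ) ^ ((2:ℝ)/3)) ^ ((1:ℝ)/2) :=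
            Real.rpow_le_rpow hk0.le hc (by norm_num)
        _ = (n:ℝ) ^ ((1:ℝ)/3) := by
            rw [← Real.rpow_mul hn0.le]; norm_num
    exact div_le_div_of_nonneg_left hOPT (Real.sqrt_pos.2 hk0) hsq
  · -- k ≥ n^(2/3), use V₂
    push_neg at hc
    refine le_trans (le_trans ?_ h2) (le_max_right _ _)
    rw [div_eq_mul_inv OPT, mul_comm]
    apply mul_le_mul_of_nonneg_right _ hOPT
    rw [← Real.rpow_neg_one, ← Real.rpow_mul hn0.le]
    have heq : ((n:ℝ) ^ ((1:ℝ)/3 * (-1))) = (n:ℝ) ^ ((2:ℝ)/3) / (n:ℝ) := by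
      rw [show (1:ℝ)/3 * (-1) = (2:ℝ)/3 - 1 by norm_num, Real.rpow_sub hn0,
        Real.rpow_one]
    rw [heq]
    gcongr
end
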